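/- arXiv:1207.0696 — 2 statements merged into one kernel-verified Lean document; each statement's English description precedes it below -/
import Mathlib

section
/- If a function F : ℝ[[X]] → ℝ[[X]] is NS*-continuous (i.e., for all x₁, x₂, it is never the case that |x₂ − x₁| ≪ |F(x₂) − F(x₁)|, where a ≪ b means k·|a| < |b| for all naturals k), then F is continuous in the order topology of the lexicographically ordered ring ℝ[[X]]: for every x₀ and every ε > 0 there exists η > 0 such that |x − x₀| < η implies |F(x) − F(x₀)| < ε. -/
open PowerSeries

attribute [local instance] Classical.propDecidable

/-- `z` is positive for the lexicographic order on `ℝ[[X]]`. -/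
def IsPos (z : PowerSeries ℝ) : Prop :=
  ∃ p : ℕ, (∀ k < p, coeff k z = 0) ∧ 0 < coeff p z

/-- The lexicographic order on `ℝ[[X]]`. -/
def lexLe (x y : PowerSeries ℝ) : Prop := x = y ∨ IsPos (y - x)

/-- Strict lexicographic order. -/
def lexLt (x y : PowerSeries ℝ) : Prop := IsPos (y - x)

/-- Absolute value for the lexicographic order. -/
noncomputable def pabs (x : PowerSeries ℝ) : PowerSeries ℝ :=
  if lexLe 0 x then x else -x

/-- `a ≪ b` : `k·|a| < |b|` for all naturals `k`. -/
def muchLt (a b : PowerSeries ℝ) : Prop :=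
  ∀ k : ℕ, lexLt ((k : PowerSeries ℝ) * pabs a) (pabs b)

/-- `F` is NS*-continuous: for no `x₁, x₂` does `|x₂ − x₁| ≪ |F x₂ − F x₁|` hold. -/
def NSStarContinuous (F : PowerSeries ℝ → PowerSeries ℝ) : Prop :=
  ∀ x₁ x₂ : PowerSeries ℝ, ¬ muchLt (x₂ - x₁) (F x₂ - F x₁)

/-- `F` is continuous at `x₀` for the order topology (ε-η form). -/
def OrderContinuousAt (F : PowerSeries ℝ → PowerSeries ℝ) (x₀ : PowerSeries ℝ) : Prop :=
  ∀ ε : PowerSeries ℝ, lexLt 0 ε → ∃ η : PowerSeries ℝ, lexLt 0 η ∧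
    ∀ x : PowerSeries ℝ, lexLt (pabs (x - x₀)) η → lexLt (pabs (F x - F x₀)) ε

/-- minimal nonzero coefficient index -/
lemma exists_min_coeff (z : PowerSeries ℝ) (hz : z ≠ 0) :
    ∃ p : ℕ, (∀ k < p, coeff k z = 0) ∧ coeff p z ≠ 0 := by
  have h : ∃ n, coeff n z ≠ 0 := by
    by_contra h
    push_neg at h
    exact hz (PowerSeries.ext fun n => by simpa using h n)
  refine ⟨Nat.find h, fun k hk => ?_, Nat.find_spec h⟩
  by_contra hk'
  exact absurd hk (not_lt.mpr (Nat.find_le hk'))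

lemma trichotomy (z : PowerSeries ℝ) (hz : z ≠ 0) : IsPos z ∨ IsPos (-z) := by
  obtain ⟨p, hp, hp'⟩ := exists_min_coeff z hz
  rcases lt_or_gt_of_ne hp' with h | h
  · right
    exact ⟨p, fun k hk => by simp [hp k hk], by simpa using h⟩
  · left
    exact ⟨p, hp, h⟩

lemma isPos_add {a b : PowerSeries ℝ} (ha : IsPos a) (hb : IsPos b) : IsPos (a + b) := by
  obtain ⟨p, hp, hp'⟩ := ha
  obtain ⟨q, hq, hq'⟩ := hb
  refine ⟨min p q, fun k hk => ?_, ?_⟩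
  · simp [hp k (lt_of_lt_of_le hk (min_le_left _ _)),
      hq k (lt_of_lt_of_le hk (min_le_right _ _))]
  · rcases lt_trichotomy p q with h | h | h
    · simp only [min_eq_left h.le, map_add]
      have : coeff p b = 0 := hq p h
      simpa [this] using hp'
    · subst h
      simp only [min_self, map_add]
      positivity
    · simp only [min_eq_right h.le, map_add]
      have : coeff q a = 0 := hp q h
      simpa [this] using hq'

lemma pabs_nonneg (z : PowerSeries ℝ) : lexLe 0 (pabs z) := by
  unfold pabs
  split_ifs with h
  · exact h
  · have hz : z ≠ 0 := by
      rintro rfl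
      exact h (Or.inl rfl)
    rcases trichotomy z hz with hp | hp
    · exact absurd (Or.inr (by simpa using hp)) h
    · exact Or.inr (by simpa using hp)

lemma coeff_low_zero {p : ℕ} {w : PowerSeries ℝ}
    (hw0 : lexLe 0 w) (hx : IsPos ((PowerSeries.X : PowerSeries ℝ) ^ (p + 1) - w)) :
    ∀ j ≤ p, coeff j w = 0 := by
  obtain ⟨q, hq, hq'⟩ := hx
  have hq1 : p + 1 ≤ q := by
    by_contra hle
    push_neg at hle
    have hqp : q ≤ p := Nat.lt_succ_iff.mp hle
    have hXq : coeff q ((PowerSeries.X : PowerSeries ℝ) ^ (p + 1)) = 0 := by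
      rw [PowerSeries.coeff_X_pow]
      simp [Nat.ne_of_lt (Nat.lt_succ_of_le hqp)]
    have hwq : coeff q w < 0 := by
      have := hq'
      rw [map_sub, hXq] at this
      linarith
    have hwlow : ∀ k < q, coeff k w = 0 := by
      intro k hk
      have h1 := hq k hk
      have hXk : coeff k ((PowerSeries.X : PowerSeries ℝ) ^ (p + 1)) = 0 := by
        rw [PowerSeries.coeff_X_pow]
        simp [Nat.ne_of_lt (Nat.lt_succ_of_le (le_trans (le_of_lt (lt_of_lt_of_le hk hqp)) le_rfl))]
      rw [map_sub, hXk] at h1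
      linarith
    rcases hw0 with h | h
    · rw [← h] at hwq; simp at hwq
    · obtain ⟨r, hr, hr'⟩ := h
      simp only [sub_zero] at hr hr'
      rcases lt_trichotomy r q with h1 | h1 | h1
      · rw [hwlow r h1] at hr'; linarith
      · subst h1; linarith
      · rw [hr q h1] at hwq; linarith
  intro j hj
  have h1 := hq j (lt_of_lt_of_le (Nat.lt_succ_of_le hj) hq1)
  have hXj : coeff j ((PowerSeries.X : PowerSeries ℝ) ^ (p + 1)) = 0 := by
    rw [PowerSeries.coeff_X_pow]
    simp [Nat.ne_of_lt (Nat.lt_succ_of_le hj)]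
  rw [map_sub, hXj] at h1
  linarith

lemma coeff_natCast_mul (k : ℕ) (w : PowerSeries ℝ) (n : ℕ) :
    coeff n ((k : PowerSeries ℝ) * w) = (k : ℝ) * coeff n w := by
  have : (k : PowerSeries ℝ) = PowerSeries.C (R := ℝ) (k : ℝ) := by
    simp [map_natCast (PowerSeries.C (R := ℝ)) k]
  rw [this, PowerSeries.coeff_C_mul]

/-- every NS*-continuous function `ℝ[[X]] → ℝ[[X]]` is continuous
everywhere in the order topology. -/
theorem nsStarContinuous_orderContinuous (F : PowerSeries ℝ → PowerSeries ℝ)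
    (hF : NSStarContinuous F) : ∀ x₀ : PowerSeries ℝ, OrderContinuousAt F x₀ := by
  intro x₀ ε hε
  have hε' : IsPos ε := by simpa [lexLt] using hε
  obtain ⟨p, hp, hp'⟩ := hε'
  refine ⟨(PowerSeries.X : PowerSeries ℝ) ^ (p + 1), ?_, ?_⟩
  · show IsPos _
    refine ⟨p + 1, fun k hk => ?_, ?_⟩
    · simp [PowerSeries.coeff_X_pow, Nat.ne_of_lt hk]
    · simp [PowerSeries.coeff_X_pow]
  · intro x hx
    set w := pabs (x - x₀) with hw
    have hx' : IsPos ((PowerSeries.X : PowerSeries ℝ) ^ (p + 1) - w) := hx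
    have hwlow := coeff_low_zero (pabs_nonneg _) hx'
    have hnot := hF x₀ x
    rw [NSStarContinuous] at hF
    obtain ⟨k, hk⟩ := not_forall.mp hnot
    set u := pabs (F x - F x₀) with hu
    have hk' : ¬ IsPos (u - (k : PowerSeries ℝ) * w) := hk
    have h1 : IsPos (ε - (k : PowerSeries ℝ) * w) := by
      refine ⟨p, fun j hj => ?_, ?_⟩
      · rw [map_sub, hp j hj, coeff_natCast_mul, hwlow j hj.le]
        ring
      · rw [map_sub, coeff_natCast_mul, hwlow p le_rfl]
        simpa using hp'
    show IsPos (ε - u)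
    by_cases hz : u - (k : PowerSeries ℝ) * w = 0
    · have : u = (k : PowerSeries ℝ) * w := by
        have := sub_eq_zero.mp hz; exact this
      rw [this]; exact h1
    · rcases trichotomy _ hz with h | h
      · exact absurd h hk'
      · have heq : ε - u = (ε - (k : PowerSeries ℝ) * w) + -(u - (k : PowerSeries ℝ) * w) := by
          ring
        rw [heq]
        exact isPos_add h1 h
end

section
/- In the lexicographically ordered ring ℝ[[X]], every Cauchy sequence converges: if (u_n) satisfies that for every ε > 0 in ℝ[[X]] there is N with |u_p − u_q| < ε for all p, q ≥ N, then there exists l ∈ ℝ[[X]] with u_n → l in the order topology. -/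
open PowerSeries

attribute [local instance] Classical.propDecidable

lemma coeff_pabs_zero_iff (z : PowerSeries ℝ) (k : ℕ) :
    coeff k (pabs z) = 0 ↔ coeff k z = 0 := by
  unfold pabs; split_ifs with h
  · rfl
  · simp

lemma pabs_first_nonneg (z : PowerSeries ℝ) (p : ℕ)
    (h : ∀ k < p, coeff k (pabs z) = 0) : 0 ≤ coeff p (pabs z) := by
  unfold pabs at *
  split_ifs at * with hle
  · rcases hle with rfl | ⟨q, hq1, hq2⟩
    · simp
    · rw [sub_zero] at hq1 hq2
      rcases lt_trichotomy p q with hpq | rfl | hqp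
      · rw [hq1 p hpq]
      · exact hq2.le
      · exact absurd (h q hqp) (ne_of_gt hq2)
  · by_contra hneg
    push_neg at hneg
    refine hle (Or.inr ⟨p, ?_, ?_⟩)
    · intro k hk
      have := h k hk
      rw [sub_zero]
      simpa using this
    · rw [sub_zero]
      rw [map_neg] at hneg
      linarith

lemma coeff_eq_zero_of_lt_Xpow (z : PowerSeries ℝ) (n : ℕ)
    (h : lexLt (pabs z) ((X : PowerSeries ℝ) ^ (n + 1))) :
    ∀ k ≤ n, coeff k z = 0 := by
  obtain ⟨p, h1, h2⟩ := h
  have hcoeff : ∀ k < p, coeff k (pabs z) = coeff k ((X : PowerSeries ℝ) ^ (n + 1)) := by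
    intro k hk
    have := h1 k hk
    rw [map_sub, sub_eq_zero] at this
    exact this.symm
  have hp : n + 1 ≤ p := by
    by_contra hlt
    push_neg at hlt
    have hz : ∀ k < p, coeff k (pabs z) = 0 := by
      intro k hk
      rw [hcoeff k hk, coeff_X_pow, if_neg (by omega)]
    have hnn := pabs_first_nonneg z p hz
    rw [map_sub, coeff_X_pow, if_neg (by omega)] at h2
    linarith
  intro k hk
  rw [← coeff_pabs_zero_iff]
  have := hcoeff k (by omega)
  rw [this, coeff_X_pow, if_neg (by omega)]

lemma pos_Xpow (n : ℕ) : lexLt 0 ((X : PowerSeries ℝ) ^ (n + 1)) := by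
  refine ⟨n + 1, ?_, ?_⟩
  · intro k hk
    rw [sub_zero, coeff_X_pow, if_neg (by omega)]
  · rw [sub_zero, coeff_X_pow, if_pos rfl]; norm_num

/-- every Cauchy sequence in the lexicographically ordered ring `ℝ[[X]]`
converges in the order topology. -/
theorem powerSeries_cauchy_complete (u : ℕ → PowerSeries ℝ)
    (hC : ∀ ε : PowerSeries ℝ, lexLt 0 ε →
      ∃ N : ℕ, ∀ p q : ℕ, N ≤ p → N ≤ q → lexLt (pabs (u p - u q)) ε) :
    ∃ l : PowerSeries ℝ, ∀ ε : PowerSeries ℝ, lexLt 0 ε →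
      ∃ N : ℕ, ∀ p : ℕ, N ≤ p → lexLt (pabs (u p - l)) ε := by
  choose f hf using fun n => hC ((X : PowerSeries ℝ) ^ (n + 1)) (pos_Xpow n)
  set l : PowerSeries ℝ := PowerSeries.mk (fun n => coeff n (u (f n))) with hl
  have hlcoeff : ∀ n, coeff n l = coeff n (u (f n)) := fun n => coeff_mk n _
  have key : ∀ k q, f k ≤ q → coeff k (u q) = coeff k l := by
    intro k q hq
    have := coeff_eq_zero_of_lt_Xpow _ k (hf k q (f k) hq le_rfl) k le_rfl
    rw [map_sub, sub_eq_zero] at this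
    rw [this, hlcoeff]
  refine ⟨l, fun ε hε => ?_⟩
  obtain ⟨p, h1, h2⟩ := hε
  rw [sub_zero] at h2
  refine ⟨f p, fun q hq => ?_⟩
  have hzero : ∀ k ≤ p, coeff k (u q - l) = 0 := by
    intro k hk
    set r := max q (f k) with hr
    have h1r : coeff k (u r) = coeff k l := key k r (le_max_right _ _)
    have h2r : coeff k (u q) = coeff k (u r) := by
      have := coeff_eq_zero_of_lt_Xpow _ p
        (hf p q r hq (le_trans hq (le_max_left _ _))) k hk
      rw [map_sub, sub_eq_zero] at this
      exact this
    rw [map_sub, h2r, h1r, sub_self]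
  refine ⟨p, ?_, ?_⟩
  · intro k hk
    have hz := (coeff_pabs_zero_iff _ k).mpr (hzero k (le_of_lt hk))
    have := h1 k hk
    rw [sub_zero] at this
    rw [map_sub, hz, sub_zero, this]
  · have hz := (coeff_pabs_zero_iff _ p).mpr (hzero p le_rfl)
    rw [map_sub, hz, sub_zero]
    exact h2
end
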